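/- arXiv:1801.04322 — 2 statements merged into one kernel-verified Lean document; each statement's English description precedes it below -/
import Mathlib

section
/- Let s₀ > 0, v ∈ ℝ² with v ≠ 0, x₀ ∈ ℝ², and F(x) = 1/s₀ + v·(x−x₀). Then at any point x ≠ x₀ with F(x) > 0, the function u(x) = (1/|v|)·arccosh(1 + (1/2)·s₀·|v|²·|x−x₀|²/F(x)) is differentiable and satisfies |∇u(x)|·F(x) = 1. -/
noncomputable def arccosh (x : ℝ) : ℝ := Real.log (x + Real.sqrt (x ^ 2 - 1))

lemma arccosh_hasDerivAt {W : ℝ} (hW1 : 1 < W) :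
    HasDerivAt (fun t : ℝ => Real.log (t + Real.sqrt (t^2 - 1)))
      (Real.sqrt (W^2 - 1))⁻¹ W := by
  have hW2 : 0 < W^2 - 1 := by nlinarith
  set s : ℝ := Real.sqrt (W^2 - 1) with hs
  have hspos : 0 < s := Real.sqrt_pos.2 hW2
  have hs2 : s^2 = W^2 - 1 := Real.sq_sqrt hW2.le
  have d1 : HasDerivAt (fun t : ℝ => t^2 - 1) (2*W) W := by
    simpa using (hasDerivAt_pow 2 W).sub_const 1
  have d2 : HasDerivAt (fun t : ℝ => Real.sqrt (t^2 - 1)) (W/s) W := by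
    have := (Real.hasDerivAt_sqrt hW2.ne').comp W d1
    refine this.congr_deriv (Eq.symm ?_)
    rw [← hs]
    field_simp
  have d3 : HasDerivAt (fun t : ℝ => t + Real.sqrt (t^2 - 1)) (1 + W/s) W :=
    (hasDerivAt_id W).add d2
  have hne : W + s ≠ 0 := by nlinarith
  have d4 := d3.log hne
  convert d4 using 1
  rw [eq_div_iff hne]
  field_simp
  nlinarith [hs2]

set_option maxHeartbeats 1000000 in
theorem stmt1 (s₀ : ℝ) (hs₀ : 0 < s₀) (v x₀ : EuclideanSpace ℝ (Fin 2)) (hv : v ≠ 0)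
    (F : EuclideanSpace ℝ (Fin 2) → ℝ)
    (hF : ∀ x, F x = 1 / s₀ + inner ℝ v (x - x₀))
    (u : EuclideanSpace ℝ (Fin 2) → ℝ)
    (hu : ∀ x, u x = (1 / ‖v‖) *
      arccosh (1 + (1 / 2) * s₀ * ‖v‖ ^ 2 * ‖x - x₀‖ ^ 2 / F x))
    (x : EuclideanSpace ℝ (Fin 2)) (hx : x ≠ x₀) (hFx : 0 < F x) :
    DifferentiableAt ℝ u x ∧ ‖gradient u x‖ * F x = 1 := by
  set r : EuclideanSpace ℝ (Fin 2) := x - x₀ with hr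
  have hrne : r ≠ 0 := sub_ne_zero.2 hx
  have hnr : (0:ℝ) < ‖r‖ := norm_pos_iff.2 hrne
  have hnv : (0:ℝ) < ‖v‖ := norm_pos_iff.2 hv
  set c : ℝ := (1/2) * s₀ * ‖v‖^2 with hc
  have hcpos : 0 < c := by positivity
  -- derivative of F
  have hFd : HasFDerivAt F (innerSL ℝ v) x := by
    have hFeq : F = fun y => (1/s₀ - (inner ℝ v x₀ : ℝ)) + (innerSL ℝ v) y := by
      funext y
      rw [hF]
      simp [inner_sub_right]
      ring
    rw [hFeq]
    exact ((innerSL ℝ v).hasFDerivAt).const_add _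
  -- derivative of squared norm
  have hqd : HasFDerivAt (fun y : EuclideanSpace ℝ (Fin 2) => ‖y - x₀‖^2) (innerSL ℝ ((2:ℝ) • r)) x := by
    have h1 : HasFDerivAt (fun y : EuclideanSpace ℝ (Fin 2) => y - x₀) (ContinuousLinearMap.id ℝ (EuclideanSpace ℝ (Fin 2))) x :=
      (hasFDerivAt_id x).sub_const x₀
    have h2 := h1.inner ℝ h1
    have h3 : (fun y : EuclideanSpace ℝ (Fin 2) => ‖y - x₀‖^2) = fun y : EuclideanSpace ℝ (Fin 2) => (inner ℝ (y - x₀) (y - x₀) : ℝ) := by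
      funext y; rw [real_inner_self_eq_norm_sq]
    rw [h3]
    refine h2.congr_fderiv (Eq.symm ?_)
    ext y
    simp only [innerSL_apply_apply, fderivInnerCLM_apply, ContinuousLinearMap.comp_apply,
      ContinuousLinearMap.prod_apply, ContinuousLinearMap.id_apply, real_inner_smul_left]
    rw [real_inner_comm]
    ring
  -- derivative of 1/F
  have hFinv : HasFDerivAt (fun y => (F y)⁻¹) ((-(F x ^ 2)⁻¹) • innerSL ℝ v) x := by
    exact (hasDerivAt_inv hFx.ne').comp_hasFDerivAt x hFd
  -- the inner function w
  set w : EuclideanSpace ℝ (Fin 2) → ℝ := fun y => 1 + c * ‖y - x₀‖^2 * (F y)⁻¹ with hwdef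
  set Dw : EuclideanSpace ℝ (Fin 2) →L[ℝ] ℝ :=
    ((c * ‖r‖^2) • ((-(F x ^ 2)⁻¹) • innerSL ℝ v) + (F x)⁻¹ • ((c:ℝ) • innerSL ℝ ((2:ℝ) • r)))
    with hDw
  have hwd : HasFDerivAt w Dw x := by
    have := ((hqd.const_mul c).mul hFinv).const_add (1:ℝ)
    exact this
  set W : ℝ := w x with hW
  have hW1 : 1 < W := by
    have : 0 < c * ‖r‖^2 * (F x)⁻¹ := by positivity
    simp only [hW, hwdef]
    linarith
  have hW2 : 0 < W^2 - 1 := by nlinarith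
  set s : ℝ := Real.sqrt (W^2 - 1) with hs
  have hspos : 0 < s := Real.sqrt_pos.2 hW2
  have hs2 : s^2 = W^2 - 1 := Real.sq_sqrt hW2.le
  -- derivative of arccosh at W
  have harc : HasDerivAt (fun t : ℝ => Real.log (t + Real.sqrt (t^2 - 1))) s⁻¹ W :=
    hs ▸ arccosh_hasDerivAt hW1
  -- u as composition
  have hueq : u = fun y => (1/‖v‖) * Real.log (w y + Real.sqrt ((w y)^2 - 1)) := by
    funext y
    rw [hu, arccosh]
    simp only [hwdef, hc, div_eq_mul_inv]
  have hud : HasFDerivAt u ((1/‖v‖) • (s⁻¹ • Dw)) x := by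
    rw [hueq]
    exact ((harc.comp_hasFDerivAt x hwd).const_mul (1/‖v‖)).congr_fderiv rfl
  -- the gradient
  set g : EuclideanSpace ℝ (Fin 2) := ((1/‖v‖) * s⁻¹ * c * (F x ^ 2)⁻¹) • ((F x * 2) • r - ‖r‖^2 • v) with hg
  have hgrad : HasGradientAt u g x := by
    rw [hasGradientAt_iff_hasFDerivAt]
    refine hud.congr_fderiv (Eq.symm ?_)
    ext y
    simp only [hg, hDw, InnerProductSpace.toDual_apply_apply, ContinuousLinearMap.add_apply,
      ContinuousLinearMap.coe_smul', Pi.smul_apply, innerSL_apply_apply, inner_sub_left,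
      real_inner_smul_left, smul_eq_mul]
    field_simp
    ring
  refine ⟨hgrad.differentiableAt, ?_⟩
  rw [hgrad.gradient]
  -- norm computation
  have hvr : (inner ℝ v r : ℝ) = F x - 1/s₀ := by rw [hF]; ring
  have hm : ‖(F x * 2) • r - ‖r‖^2 • v‖^2
      = (F x * 2)^2 * ‖r‖^2 - 2 * (F x * 2) * ‖r‖^2 * (F x - 1/s₀) + ‖r‖^4 * ‖v‖^2 := by
    rw [← real_inner_self_eq_norm_sq]
    have hrv : (inner ℝ r v : ℝ) = F x - 1/s₀ := by rw [real_inner_comm]; exact hvr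
    simp only [inner_sub_left, inner_sub_right, real_inner_smul_left, real_inner_smul_right,
      real_inner_self_eq_norm_sq, hrv, hvr, norm_smul, mul_pow, Real.norm_eq_abs, sq_abs]
    ring
  have hA : 0 < (1/‖v‖) * s⁻¹ * c * (F x ^ 2)⁻¹ := by positivity
  have hnorm : ‖g‖^2 = ((1/‖v‖) * s⁻¹ * c * (F x ^ 2)⁻¹)^2 *
      ((F x * 2)^2 * ‖r‖^2 - 2 * (F x * 2) * ‖r‖^2 * (F x - 1/s₀) + ‖r‖^4 * ‖v‖^2) := by
    rw [hg, norm_smul, mul_pow, ← hm, Real.norm_eq_abs, sq_abs]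
  have hWval : W = 1 + c * ‖r‖^2 * (F x)⁻¹ := rfl
  have hT : (0:ℝ) < 2*F x + c*‖r‖^2 := by positivity
  have hs2'' : s^2 = c * ‖r‖^2 * (2*F x + c*‖r‖^2) / F x^2 := by
    rw [hs2, hWval]
    field_simp
    ring
  have hM : (F x * 2)^2 * ‖r‖^2 - 2*(F x * 2)*‖r‖^2*(F x - 1/s₀) + ‖r‖^4*‖v‖^2
      = (2*‖r‖^2/s₀) * (2*F x + c*‖r‖^2) := by
    rw [hc]
    field_simp
    ring
  have hsq : (‖g‖ * F x)^2 = 1 := by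
    rw [mul_pow, hnorm, hM]
    simp only [mul_pow, inv_pow]
    rw [hs2'']
    rw [hc]
    field_simp
  have h0 : 0 ≤ ‖g‖ * F x := mul_nonneg (norm_nonneg g) hFx.le
  have hfac : (‖g‖ * F x - 1) * (‖g‖ * F x + 1) = 0 := by nlinarith [hsq]
  rcases mul_eq_zero.1 hfac with h | h
  · linarith
  · linarith
end

section
/- In the double-refraction setup with 0 < F_ob < F_free and θ₁ ∈ [0, π/2), a real refraction angle θ₃ ∈ [0, π/2) satisfying cos θ₂ / F_ob = sin θ₃ / F_free (where sin θ₂ = (F_ob/F_free) sin θ₁) exists if and only if Υ² − sin² θ₁ < 1, where Υ = F_free/F_ob; otherwise total internal reflection occurs (θ₃ = π/2). -/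
open Real

theorem stmt18 (F_ob F_free Υ θ₁ θ₂ : ℝ)
    (hob : 0 < F_ob) (hlt : F_ob < F_free) (hΥ : Υ = F_free / F_ob)
    (hθ₁ : θ₁ ∈ Set.Ico 0 (π / 2)) (hθ₂ : θ₂ ∈ Set.Ico 0 (π / 2))
    (hsnell₁ : Real.sin θ₂ = (F_ob / F_free) * Real.sin θ₁) :
    (∃ θ₃ ∈ Set.Ico 0 (π / 2),
        Real.cos θ₂ / F_ob = Real.sin θ₃ / F_free) ↔
      Υ ^ 2 - Real.sin θ₁ ^ 2 < 1 := by
  have hfree : 0 < F_free := hob.trans hlt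
  have hcos2 : 0 ≤ Real.cos θ₂ := by
    apply Real.cos_nonneg_of_mem_Icc
    constructor
    · linarith [hθ₂.1, Real.pi_pos]
    · exact hθ₂.2.le
  have hkey : Υ ^ 2 * Real.cos θ₂ ^ 2 = Υ ^ 2 - Real.sin θ₁ ^ 2 := by
    have hs : Real.sin θ₂ ^ 2 + Real.cos θ₂ ^ 2 = 1 := Real.sin_sq_add_cos_sq θ₂
    have hΥne : Υ ≠ 0 := by
      rw [hΥ]; positivity
    have h2 : Υ * Real.sin θ₂ = Real.sin θ₁ := by
      rw [hsnell₁, hΥ]; field_simp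
    have h3 : Real.sin θ₁ ^ 2 = Υ ^ 2 * Real.sin θ₂ ^ 2 := by rw [← h2]; ring
    linear_combination Υ ^ 2 * hs + h3
  have hΥpos : 0 < Υ := by rw [hΥ]; positivity
  constructor
  · rintro ⟨θ₃, ⟨h0, h1⟩, heq⟩
    have hsin : Real.sin θ₃ = Υ * Real.cos θ₂ := by
      rw [hΥ]; field_simp at heq ⊢; linarith
    have hlt1 : Real.sin θ₃ < 1 := by
      have := Real.sin_lt_sin_of_lt_of_le_pi_div_two (x := θ₃) (y := π/2)
        (by linarith [Real.pi_pos]) le_rfl h1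
      simpa using this
    have hge : 0 ≤ Real.sin θ₃ := Real.sin_nonneg_of_nonneg_of_le_pi h0
      (by linarith [Real.pi_pos, h1])
    nlinarith [hkey, hsin]
  · intro h
    set x := Υ * Real.cos θ₂ with hx
    have hx0 : 0 ≤ x := mul_nonneg hΥpos.le hcos2
    have hx1 : x < 1 := by nlinarith [hkey]
    refine ⟨Real.arcsin x, ⟨Real.arcsin_nonneg.mpr hx0, ?_⟩, ?_⟩
    · exact Real.arcsin_lt_pi_div_two.mpr hx1
    · rw [Real.sin_arcsin (by linarith) hx1.le, hx, hΥ]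
      field_simp
end
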